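/- arXiv:1507.02323 — 3 statements merged into one kernel-verified Lean document; each statement's English description precedes it below -/
import Mathlib

section
/- Let $X$ be a binomial random variable with parameters $m$ and $p = \alpha \log(m)/m$, and $W$ an independent binomial random variable with parameters $m$ and $q = \beta \log(m)/m$, where $\alpha > \beta > 0$ are constants with $\sqrt{\alpha} - \sqrt{\beta} > 1$. Then there exists $\epsilon > 0$ such that for all sufficiently large $m$, $\mathbb{P}(X - W \leq \epsilon \log m) \leq m^{-1-\epsilon}$. -/
open Finset Real

/-- The probability mass function of a binomial random variable with
parameters `m` and `p`, evaluated at `j`. -/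
noncomputable def binomPMF (m : ℕ) (p : ℝ) (j : ℕ) : ℝ :=
  (m.choose j : ℝ) * p ^ j * (1 - p) ^ (m - j)

lemma binomPMF_nonneg {m j : ℕ} {p : ℝ} (h0 : 0 ≤ p) (h1 : p ≤ 1) :
    0 ≤ binomPMF m p j :=
  mul_nonneg (mul_nonneg (Nat.cast_nonneg _) (pow_nonneg h0 _))
    (pow_nonneg (by linarith) _)

lemma sum_binomPMF_mul_exp (m : ℕ) (p c : ℝ) :
    ∑ j ∈ Finset.range (m + 1), binomPMF m p j * Real.exp (c * j)
      = (p * Real.exp c + (1 - p)) ^ m := by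
  rw [add_pow]
  refine Finset.sum_congr rfl fun j hj => ?_
  have hexp : Real.exp (c * j) = Real.exp c ^ j := by rw [mul_comm, Real.exp_nat_mul]
  rw [hexp, binomPMF, mul_pow]
  ring

lemma binom_mgf_le (m : ℕ) (p c : ℝ) (hp0 : 0 ≤ p) (hp1 : p ≤ 1) :
    (p * Real.exp c + (1 - p)) ^ m ≤ Real.exp (m * (p * (Real.exp c - 1))) := by
  have h1 : p * Real.exp c + (1 - p) = p * (Real.exp c - 1) + 1 := by ring
  have h2 : 0 ≤ p * Real.exp c + (1 - p) :=
    add_nonneg (mul_nonneg hp0 (Real.exp_pos c).le) (by linarith)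
  calc (p * Real.exp c + (1 - p)) ^ m
      ≤ Real.exp (p * (Real.exp c - 1)) ^ m := by
        apply pow_le_pow_left₀ h2
        rw [h1]; exact Real.add_one_le_exp _
    _ = Real.exp (m * (p * (Real.exp c - 1))) := (Real.exp_nat_mul _ m).symm

theorem stmt_8 (α β : ℝ) (hβ : 0 < β) (hαβ : β < α)
    (hthr : Real.sqrt α - Real.sqrt β > 1) :
    ∃ ε > (0 : ℝ), ∃ M : ℕ, ∀ m ≥ M,
      (∑ x ∈ Finset.range (m + 1), ∑ w ∈ Finset.range (m + 1),
          if (x : ℝ) - (w : ℝ) ≤ ε * Real.log m then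
            binomPMF m (α * Real.log m / m) x * binomPMF m (β * Real.log m / m) w
          else 0)
        ≤ (m : ℝ) ^ (-(1 + ε)) := by
  have hα : 0 < α := hβ.trans hαβ
  set a := Real.sqrt α with ha_def
  set b := Real.sqrt β with hb_def
  have hb0 : 0 < b := Real.sqrt_pos.mpr hβ
  have ha0 : 0 < a := Real.sqrt_pos.mpr hα
  have hab : b < a := by linarith
  have ha2 : a ^ 2 = α := Real.sq_sqrt hα.le
  have hb2 : b ^ 2 = β := Real.sq_sqrt hβ.le
  set L := Real.log (a / b) with hL_def
  have hL : 0 < L := Real.log_pos ((one_lt_div hb0).mpr hab)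
  have hexpL : Real.exp L = a / b := Real.exp_log (div_pos ha0 hb0)
  have hexpnL : Real.exp (-L) = b / a := by
    rw [Real.exp_neg, hexpL, inv_div]
  set ε := ((a - b) ^ 2 - 1) / (L + 1) with hε_def
  have hεnum : 0 < (a - b) ^ 2 - 1 := by nlinarith
  have hε : 0 < ε := div_pos hεnum (by linarith)
  have hεeq : ε * (L + 1) = (a - b) ^ 2 - 1 := by
    rw [hε_def]; field_simp
  refine ⟨ε, hε, ?_⟩
  have htend : Filter.Tendsto (fun n : ℕ => α * (Real.log n / n)) Filter.atTop (nhds 0) := by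
    have h0 := Real.isLittleO_log_id_atTop.tendsto_div_nhds_zero
    have h1 := (h0.comp tendsto_natCast_atTop_atTop).const_mul α
    simpa using h1
  have hev : ∀ᶠ n : ℕ in Filter.atTop, α * (Real.log n / n) < 1 :=
    htend.eventually_lt_const (by norm_num)
  obtain ⟨M₀, hM₀⟩ := Filter.eventually_atTop.mp hev
  refine ⟨max M₀ 1, fun m hm => ?_⟩
  have hm1 : 1 ≤ m := le_trans (le_max_right _ _) hm
  have hmpos : (0:ℝ) < m := by exact_mod_cast hm1
  have hm0 : (m:ℝ) ≠ 0 := ne_of_gt hmpos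
  have hlogm : 0 ≤ Real.log m := Real.log_nonneg (by exact_mod_cast hm1)
  set p := α * Real.log m / m with hp_def
  set q := β * Real.log m / m with hq_def
  have hp0 : 0 ≤ p := div_nonneg (mul_nonneg hα.le hlogm) hmpos.le
  have hq0 : 0 ≤ q := div_nonneg (mul_nonneg hβ.le hlogm) hmpos.le
  have hp1 : p ≤ 1 := by
    have h2 : α * (Real.log m / m) < 1 := hM₀ m (le_trans (le_max_left _ _) hm)
    rw [hp_def, mul_div_assoc]
    linarith
  have hq1 : q ≤ 1 := by
    have hqp : q ≤ p := by
      rw [hp_def, hq_def]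
      gcongr
    linarith
  have hPn : ∀ x : ℕ, 0 ≤ binomPMF m p x := fun x => binomPMF_nonneg hp0 hp1
  have hQn : ∀ w : ℕ, 0 ≤ binomPMF m q w := fun w => binomPMF_nonneg hq0 hq1
  have step1 : (∑ x ∈ Finset.range (m + 1), ∑ w ∈ Finset.range (m + 1),
        if (x : ℝ) - (w : ℝ) ≤ ε * Real.log m then binomPMF m p x * binomPMF m q w else 0)
      ≤ ∑ x ∈ Finset.range (m + 1), ∑ w ∈ Finset.range (m + 1),
        Real.exp (L * (ε * Real.log m)) *
          ((binomPMF m p x * Real.exp (-L * x)) * (binomPMF m q w * Real.exp (L * w))) := by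
    refine Finset.sum_le_sum fun x _ => Finset.sum_le_sum fun w _ => ?_
    have hsplit : Real.exp (L * (ε * Real.log m)) *
          ((binomPMF m p x * Real.exp (-L * x)) * (binomPMF m q w * Real.exp (L * w)))
        = Real.exp (L * (ε * Real.log m - x + w)) * (binomPMF m p x * binomPMF m q w) := by
      have h3 : Real.exp (L * (ε * Real.log m - x + w))
          = Real.exp (L * (ε * Real.log m)) * Real.exp (-L * x) * Real.exp (L * w) := by
        rw [← Real.exp_add, ← Real.exp_add]
        congr 1
        ring
      rw [h3]; ring
    rw [hsplit]
    by_cases h : (x : ℝ) - (w : ℝ) ≤ ε * Real.log m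
    · rw [if_pos h]
      have h1 : (1:ℝ) ≤ Real.exp (L * (ε * Real.log m - x + w)) := by
        rw [Real.one_le_exp_iff]
        exact mul_nonneg hL.le (by linarith)
      exact le_mul_of_one_le_left (mul_nonneg (hPn x) (hQn w)) h1
    · rw [if_neg h]
      exact mul_nonneg (Real.exp_pos _).le (mul_nonneg (hPn x) (hQn w))
  have step2 : (∑ x ∈ Finset.range (m + 1), ∑ w ∈ Finset.range (m + 1),
        Real.exp (L * (ε * Real.log m)) *
          ((binomPMF m p x * Real.exp (-L * x)) * (binomPMF m q w * Real.exp (L * w))))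
      = Real.exp (L * (ε * Real.log m)) *
        ((∑ x ∈ Finset.range (m + 1), binomPMF m p x * Real.exp (-L * x))
          * (∑ w ∈ Finset.range (m + 1), binomPMF m q w * Real.exp (L * w))) := by
    rw [Finset.sum_mul_sum, Finset.mul_sum]
    exact Finset.sum_congr rfl fun x _ => (Finset.mul_sum _ _ _).symm
  have hsumP : (∑ x ∈ Finset.range (m + 1), binomPMF m p x * Real.exp (-L * x))
      = (p * Real.exp (-L) + (1 - p)) ^ m := sum_binomPMF_mul_exp m p (-L)
  have hsumQ : (∑ w ∈ Finset.range (m + 1), binomPMF m q w * Real.exp (L * w))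
      = (q * Real.exp L + (1 - q)) ^ m := sum_binomPMF_mul_exp m q L
  have hmgfP : (p * Real.exp (-L) + (1 - p)) ^ m
      ≤ Real.exp ((m:ℝ) * (p * (Real.exp (-L) - 1))) := binom_mgf_le m p (-L) hp0 hp1
  have hmgfQ : (q * Real.exp L + (1 - q)) ^ m
      ≤ Real.exp ((m:ℝ) * (q * (Real.exp L - 1))) := binom_mgf_le m q L hq0 hq1
  have hQbase : 0 ≤ (q * Real.exp L + (1 - q)) ^ m :=
    pow_nonneg (add_nonneg (mul_nonneg hq0 (Real.exp_pos _).le) (by linarith)) m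
  have step3 : Real.exp (L * (ε * Real.log m)) *
        ((p * Real.exp (-L) + (1 - p)) ^ m * (q * Real.exp L + (1 - q)) ^ m)
      ≤ Real.exp (L * (ε * Real.log m)) *
        (Real.exp ((m:ℝ) * (p * (Real.exp (-L) - 1)))
          * Real.exp ((m:ℝ) * (q * (Real.exp L - 1)))) := by
    refine mul_le_mul_of_nonneg_left ?_ (Real.exp_pos _).le
    exact mul_le_mul hmgfP hmgfQ hQbase (Real.exp_pos _).le
  have hmp : (m:ℝ) * p = α * Real.log m := by
    rw [hp_def, mul_div_assoc', mul_comm, mul_div_assoc, div_self hm0, mul_one]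
  have hmq : (m:ℝ) * q = β * Real.log m := by
    rw [hq_def, mul_div_assoc', mul_comm, mul_div_assoc, div_self hm0, mul_one]
  have hfinal : Real.exp (L * (ε * Real.log m)) *
        (Real.exp ((m:ℝ) * (p * (Real.exp (-L) - 1)))
          * Real.exp ((m:ℝ) * (q * (Real.exp L - 1))))
      = Real.exp (Real.log m * (L * ε + α * (Real.exp (-L) - 1) + β * (Real.exp L - 1))) := by
    rw [← Real.exp_add, ← Real.exp_add]
    congr 1
    have e1 : (m:ℝ) * (p * (Real.exp (-L) - 1)) = α * Real.log m * (Real.exp (-L) - 1) := by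
      rw [← mul_assoc, hmp]
    have e2 : (m:ℝ) * (q * (Real.exp L - 1)) = β * Real.log m * (Real.exp L - 1) := by
      rw [← mul_assoc, hmq]
    rw [e1, e2]; ring
  have hkey : L * ε + α * (Real.exp (-L) - 1) + β * (Real.exp L - 1) = -(1 + ε) := by
    rw [hexpL, hexpnL, ← ha2, ← hb2]
    have h1 : L * ε + a ^ 2 * (b / a - 1) + b ^ 2 * (a / b - 1) = L * ε - (a - b) ^ 2 := by
      field_simp
      ring
    rw [h1]
    have h2 : ε * L = L * ε := mul_comm _ _
    linarith [hεeq, h2]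
  have hlast : Real.exp (Real.log m * (-(1 + ε))) = (m:ℝ) ^ (-(1 + ε)) :=
    (Real.rpow_def_of_pos hmpos _).symm
  calc (∑ x ∈ Finset.range (m + 1), ∑ w ∈ Finset.range (m + 1),
        if (x : ℝ) - (w : ℝ) ≤ ε * Real.log m then binomPMF m p x * binomPMF m q w else 0)
      ≤ Real.exp (L * (ε * Real.log m)) *
        ((∑ x ∈ Finset.range (m + 1), binomPMF m p x * Real.exp (-L * x))
          * (∑ w ∈ Finset.range (m + 1), binomPMF m q w * Real.exp (L * w))) := by
        rw [← step2]; exact step1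
    _ = Real.exp (L * (ε * Real.log m)) *
        ((p * Real.exp (-L) + (1 - p)) ^ m * (q * Real.exp L + (1 - q)) ^ m) := by
        rw [hsumP, hsumQ]
    _ ≤ Real.exp (L * (ε * Real.log m)) *
        (Real.exp ((m:ℝ) * (p * (Real.exp (-L) - 1)))
          * Real.exp ((m:ℝ) * (q * (Real.exp L - 1)))) := step3
    _ = Real.exp (Real.log m * (L * ε + α * (Real.exp (-L) - 1) + β * (Real.exp L - 1))) :=
        hfinal
    _ = (m : ℝ) ^ (-(1 + ε)) := by rw [hkey, hlast]
end

section
/- Let $X \sim \mathrm{Bin}(m, \alpha \log(m)/m)$ and $W \sim \mathrm{Bin}(m, \beta \log(m)/m)$ be independent, with constants $\alpha > \beta > 0$ satisfying $\sqrt{\alpha} - \sqrt{\beta} < 1$. Then $\mathbb{P}(X - W \leq 0) \geq m^{-1+\Omega(1)}$; i.e., there exists $\epsilon > 0$ such that for all sufficiently large $m$, $\mathbb{P}(X \leq W) \geq m^{-1+\epsilon}$. -/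
open Finset Real

lemma fact_ub (k : ℕ) (hk : 1 ≤ k) :
    (Nat.factorial k : ℝ) * Real.exp ((k : ℝ) - 1) ≤ (k : ℝ) ^ (k + 1) := by
  induction k, hk using Nat.le_induction with
  | base => norm_num
  | succ n hn ih =>
    have hn0 : (1 : ℝ) ≤ (n : ℝ) := by exact_mod_cast hn
    have hnp : (0 : ℝ) < (n : ℝ) := by linarith
    have key : (n : ℝ) ^ (n + 1) * Real.exp 1 ≤ ((n : ℝ) + 1) ^ (n + 1) := by
      have h1 : (n : ℝ) / ((n : ℝ) + 1) ≤ Real.exp (-(1 / ((n : ℝ) + 1))) := by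
        have h := Real.add_one_le_exp (-(1 / ((n : ℝ) + 1)))
        have h2 : -(1 / ((n : ℝ) + 1)) + 1 = (n : ℝ) / ((n : ℝ) + 1) := by field_simp; ring
        rw [h2] at h; exact h
      have h2 : ((n : ℝ) / ((n : ℝ) + 1)) ^ (n + 1) ≤ Real.exp (-(1 : ℝ)) := by
        have h3 := pow_le_pow_left₀ (by positivity) h1 (n + 1)
        have h4 : Real.exp (-(1 / ((n : ℝ) + 1))) ^ (n + 1) = Real.exp (-1) := by
          rw [← Real.exp_nat_mul]
          congr 1
          push_cast
          field_simp
        rw [h4] at h3; exact h3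
      have h5 : (n : ℝ) ^ (n + 1) = ((n : ℝ) / ((n : ℝ) + 1)) ^ (n + 1) * ((n : ℝ) + 1) ^ (n + 1) := by
        rw [div_pow]; field_simp
      have h6 : ((n : ℝ) / ((n : ℝ) + 1)) ^ (n + 1) * ((n : ℝ) + 1) ^ (n + 1)
          ≤ Real.exp (-(1 : ℝ)) * ((n : ℝ) + 1) ^ (n + 1) :=
        mul_le_mul_of_nonneg_right h2 (by positivity)
      have h7 : Real.exp (-(1 : ℝ)) * Real.exp 1 = 1 := by
        rw [← Real.exp_add]; norm_num
      calc (n : ℝ) ^ (n + 1) * Real.exp 1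
          ≤ (Real.exp (-(1 : ℝ)) * ((n : ℝ) + 1) ^ (n + 1)) * Real.exp 1 := by
            rw [h5]; exact mul_le_mul_of_nonneg_right h6 (Real.exp_nonneg 1)
        _ = ((n : ℝ) + 1) ^ (n + 1) * (Real.exp (-(1 : ℝ)) * Real.exp 1) := by ring
        _ = ((n : ℝ) + 1) ^ (n + 1) := by rw [h7, mul_one]
    have hfe : ((Nat.factorial (n + 1) : ℕ) : ℝ) = ((n : ℝ) + 1) * (Nat.factorial n : ℝ) := by
      rw [Nat.factorial_succ]; push_cast; ring
    have hee : Real.exp (((n + 1 : ℕ) : ℝ) - 1) = Real.exp ((n : ℝ) - 1) * Real.exp 1 := by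
      rw [← Real.exp_add]; congr 1; push_cast; ring
    calc ((Nat.factorial (n + 1) : ℕ) : ℝ) * Real.exp (((n + 1 : ℕ) : ℝ) - 1)
        = ((n : ℝ) + 1) * ((Nat.factorial n : ℝ) * Real.exp ((n : ℝ) - 1)) * Real.exp 1 := by
          rw [hfe, hee]; ring
      _ ≤ ((n : ℝ) + 1) * ((n : ℝ) ^ (n + 1)) * Real.exp 1 := by
          have := mul_le_mul_of_nonneg_left ih (by linarith : (0:ℝ) ≤ (n : ℝ) + 1)
          exact mul_le_mul_of_nonneg_right this (Real.exp_nonneg 1)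
      _ = ((n : ℝ) + 1) * ((n : ℝ) ^ (n + 1) * Real.exp 1) := by ring
      _ ≤ ((n : ℝ) + 1) * ((n : ℝ) + 1) ^ (n + 1) := by
          exact mul_le_mul_of_nonneg_left key (by linarith)
      _ = ((n + 1 : ℕ) : ℝ) ^ (n + 1 + 1) := by push_cast; ring

lemma pmf_lb (m k : ℕ) (p : ℝ) (hp0 : 0 ≤ p) (hp : p ≤ 1 / 2) (hk1 : 1 ≤ k) (hkm : k ≤ m) :
    (((m : ℝ) - k) * p) ^ k * Real.exp ((k : ℝ) - 1) / (k : ℝ) ^ (k + 1) *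
      Real.exp (-((m : ℝ) * p) / (1 - p)) ≤ binomPMF m p k := by
  have hk0 : (0 : ℝ) < k := by exact_mod_cast Nat.lt_of_lt_of_le Nat.zero_lt_one hk1
  have h1p : (0 : ℝ) < 1 - p := by linarith
  have hmk0 : (0 : ℝ) ≤ (m : ℝ) - k := by
    have := (Nat.cast_le (α := ℝ)).mpr hkm; linarith
  have hch : ((m : ℝ) - k) ^ k ≤ (m.choose k : ℝ) * (Nat.factorial k : ℝ) := by
    have h1 : (m - k) ^ k ≤ m.descFactorial k :=
      le_trans (Nat.pow_le_pow_left (by omega) k) (Nat.pow_sub_le_descFactorial m k)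
    rw [Nat.descFactorial_eq_factorial_mul_choose] at h1
    have h3 : ((m : ℝ) - k) = ((m - k : ℕ) : ℝ) := by rw [Nat.cast_sub hkm]
    rw [h3, mul_comm]
    exact_mod_cast h1
  have hkey : ((m : ℝ) - k) ^ k * Real.exp ((k : ℝ) - 1) / (k : ℝ) ^ (k + 1) ≤ (m.choose k : ℝ) := by
    rw [div_le_iff₀ (by positivity)]
    calc ((m : ℝ) - k) ^ k * Real.exp ((k : ℝ) - 1)
        ≤ ((m.choose k : ℝ) * (Nat.factorial k : ℝ)) * Real.exp ((k : ℝ) - 1) :=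
          mul_le_mul_of_nonneg_right hch (Real.exp_nonneg _)
      _ = (m.choose k : ℝ) * ((Nat.factorial k : ℝ) * Real.exp ((k : ℝ) - 1)) := by ring
      _ ≤ (m.choose k : ℝ) * (k : ℝ) ^ (k + 1) :=
          mul_le_mul_of_nonneg_left (fact_ub k hk1) (Nat.cast_nonneg _)
  have hexp1 : Real.exp (-((m : ℝ) * p) / (1 - p)) ≤ (1 - p) ^ (m - k) := by
    have ha : Real.exp (-(p / (1 - p))) ≤ 1 - p := by
      have hb : 1 / (1 - p) ≤ Real.exp (p / (1 - p)) := by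
        have hc := Real.add_one_le_exp (p / (1 - p))
        have hd : 1 / (1 - p) = p / (1 - p) + 1 := by field_simp; ring
        linarith
      rw [Real.exp_neg]
      have he : (Real.exp (p / (1 - p)))⁻¹ ≤ (1 / (1 - p))⁻¹ :=
        inv_anti₀ (by positivity) hb
      rwa [one_div, inv_inv] at he
    have hbp : Real.exp (-((m : ℝ) * p) / (1 - p)) = (Real.exp (-(p / (1 - p)))) ^ m := by
      rw [← Real.exp_nat_mul]; congr 1; ring
    calc Real.exp (-((m : ℝ) * p) / (1 - p)) = (Real.exp (-(p / (1 - p)))) ^ m := hbp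
      _ ≤ (1 - p) ^ m := pow_le_pow_left₀ (Real.exp_nonneg _) ha m
      _ ≤ (1 - p) ^ (m - k) := pow_le_pow_of_le_one (le_of_lt h1p) (by linarith) (Nat.sub_le m k)
  unfold binomPMF
  have hLHSeq : (((m : ℝ) - k) * p) ^ k * Real.exp ((k : ℝ) - 1) / (k : ℝ) ^ (k + 1)
      = (((m : ℝ) - k) ^ k * Real.exp ((k : ℝ) - 1) / (k : ℝ) ^ (k + 1)) * p ^ k := by
    rw [mul_pow]; ring
  calc (((m : ℝ) - k) * p) ^ k * Real.exp ((k : ℝ) - 1) / (k : ℝ) ^ (k + 1) *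
      Real.exp (-((m : ℝ) * p) / (1 - p))
      ≤ ((m.choose k : ℝ) * p ^ k) * (1 - p) ^ (m - k) := by
        rw [hLHSeq]
        apply mul_le_mul _ hexp1 (Real.exp_nonneg _)
          (mul_nonneg (Nat.cast_nonneg _) (pow_nonneg hp0 _))
        exact mul_le_mul_of_nonneg_right hkey (pow_nonneg hp0 _)
      _ = (m.choose k : ℝ) * p ^ k * (1 - p) ^ (m - k) := by ring

lemma algebra_iden (r t e kk : ℝ) (k : ℕ) (hk : kk ≠ 0) (he : e ≠ 0) :
    (r ^ k * (e ^ k / e) / kk ^ (k + 1)) * (t ^ k * (e ^ k / e) / kk ^ (k + 1))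
      = (r * t * e ^ 2 / kk ^ 2) ^ k / (e ^ 2 * kk ^ 2) := by
  rw [div_pow, mul_pow, mul_pow]
  field_simp
  ring

set_option maxHeartbeats 1000000 in
lemma core (α β c δ ε : ℝ) (m : ℕ)
    (hα : 0 < α) (hβ : 0 < β) (hβα : β ≤ α) (hc : 0 < c) (hc2 : c ^ 2 = α * β)
    (hδ0 : 0 < δ) (hδ4 : δ ≤ 1 / 4) (hε0 : 0 < ε)
    (hexpo : -1 + ε ≤ (2 - 6 * δ) * c - (1 + 2 * δ) * (α + β) - ε)
    (hm2 : 2 ≤ m)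
    (hcL : 1 / δ ≤ c * Real.log m)
    (hpδ : α * Real.log m / m ≤ δ)
    (hkmδ : 2 * c * Real.log m ≤ δ * m)
    (hk2 : Real.exp 2 * (2 * c * Real.log m) ^ 2 ≤ (m : ℝ) ^ ε) :
    (∑ x ∈ Finset.range (m + 1), ∑ w ∈ Finset.range (m + 1),
        if x ≤ w then
          binomPMF m (α * Real.log m / m) x * binomPMF m (β * Real.log m / m) w
        else 0)
      ≥ (m : ℝ) ^ (-1 + ε) := by
  have hm2R : (2:ℝ) ≤ (m:ℝ) := by exact_mod_cast hm2
  have hm0 : (0 : ℝ) < m := by linarith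
  have hm1 : (1 : ℝ) ≤ m := by linarith
  set L := Real.log m with hLdef
  have hcL1 : (1:ℝ) ≤ c * L := le_trans (by rw [le_div_iff₀ hδ0]; linarith only [hδ4]) hcL
  have hL0 : 0 < L := by
    rcases lt_or_ge 0 L with h | h
    · exact h
    · exfalso; nlinarith only [hcL1, hc, h]
  set p := α * L / m with hpdef
  set q := β * L / m with hqdef
  have hp0 : 0 ≤ p := by positivity
  have hq0 : 0 ≤ q := by positivity
  have hqp : q ≤ p := by rw [hpdef, hqdef]; gcongr
  have hpδ' : p ≤ δ := hpδ
  have hqδ : q ≤ δ := le_trans hqp hpδ'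
  have hp12 : p ≤ 1 / 2 := by linarith
  have hq12 : q ≤ 1 / 2 := by linarith
  set k := ⌈c * L⌉₊ with hkdef
  have hk_ge : c * L ≤ (k : ℝ) := Nat.le_ceil _
  have hk_lt : (k : ℝ) < c * L + 1 := Nat.ceil_lt_add_one (by positivity)
  have hδcL : 1 ≤ δ * (c * L) := by
    rw [div_le_iff₀ hδ0] at hcL; linarith only [hcL]
  have hk_ub : (k : ℝ) ≤ (1 + δ) * (c * L) := by linarith only [hδcL, hk_lt]
  have hk2c : (k : ℝ) ≤ 2 * c * L := by
    have h1 : δ * (c * L) ≤ (1/4) * (c * L) :=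
      mul_le_mul_of_nonneg_right hδ4 (le_trans zero_le_one hcL1)
    linarith only [h1, hk_lt, hcL1, hδcL]
  have hk1 : 1 ≤ k := by
    have : (1:ℝ) ≤ (k:ℝ) := le_trans hcL1 hk_ge
    exact_mod_cast this
  have hk0R : (0:ℝ) < (k:ℝ) := by
    have : (1:ℝ) ≤ (k:ℝ) := by exact_mod_cast hk1
    linarith
  have hkδm : (k : ℝ) ≤ δ * m := le_trans hk2c hkmδ
  have hδm4 : δ * (m:ℝ) ≤ (1/4) * m := mul_le_mul_of_nonneg_right hδ4 hm0.le
  have hkm : k ≤ m := by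
    have : (k:ℝ) ≤ (m:ℝ) := by linarith only [hkδm, hδm4, hm0]
    exact_mod_cast this
  have hpmf_nonneg : ∀ (s : ℝ), 0 ≤ s → s ≤ 1 → ∀ j, 0 ≤ binomPMF m s j := by
    intro s hs0 hs1 j
    unfold binomPMF
    exact mul_nonneg (mul_nonneg (Nat.cast_nonneg _) (pow_nonneg hs0 _))
      (pow_nonneg (by linarith) _)
  have hpmfp := hpmf_nonneg p hp0 (by linarith)
  have hpmfq := hpmf_nonneg q hq0 (by linarith)
  have hk_mem : k ∈ Finset.range (m + 1) := Finset.mem_range.mpr (Nat.lt_succ_of_le hkm)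
  have hsum : binomPMF m p k * binomPMF m q k ≤
      ∑ x ∈ Finset.range (m + 1), ∑ w ∈ Finset.range (m + 1),
        if x ≤ w then binomPMF m p x * binomPMF m q w else 0 := by
    have hinner : ∀ x w : ℕ, (0:ℝ) ≤ if x ≤ w then binomPMF m p x * binomPMF m q w else 0 := by
      intro x w
      split
      · exact mul_nonneg (hpmfp x) (hpmfq w)
      · exact le_refl 0
    have h1 : (if k ≤ k then binomPMF m p k * binomPMF m q k else 0)
        ≤ ∑ w ∈ Finset.range (m+1), if k ≤ w then binomPMF m p k * binomPMF m q w else 0 :=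
      Finset.single_le_sum (fun w _ => hinner k w) hk_mem
    have h2 : (∑ w ∈ Finset.range (m+1), if k ≤ w then binomPMF m p k * binomPMF m q w else 0)
        ≤ ∑ x ∈ Finset.range (m+1), ∑ w ∈ Finset.range (m+1),
            if x ≤ w then binomPMF m p x * binomPMF m q w else 0 :=
      Finset.single_le_sum
        (f := fun x => ∑ w ∈ Finset.range (m+1),
          if x ≤ w then binomPMF m p x * binomPMF m q w else 0)
        (fun x _ => Finset.sum_nonneg (fun w _ => hinner x w)) hk_mem
    rw [if_pos le_rfl] at h1
    exact le_trans h1 h2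
  have hmk0 : (0:ℝ) ≤ (m:ℝ) - k := by linarith only [hkδm, hδm4, hm0]
  set r := ((m:ℝ) - k) * p with hrdef
  set t := ((m:ℝ) - k) * q with htdef
  have hr0 : 0 ≤ r := mul_nonneg hmk0 hp0
  have ht0 : 0 ≤ t := mul_nonneg hmk0 hq0
  have hr : (1 - δ) * (α * L) ≤ r := by
    have h1 : (1 - δ) * (m:ℝ) ≤ (m:ℝ) - k := by linarith only [hkδm]
    have h2 : (1 - δ) * (α * L) = ((1 - δ) * m) * (α * L / m) := by field_simp
    rw [h2, hrdef, hpdef]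
    exact mul_le_mul_of_nonneg_right h1 (by positivity)
  have ht : (1 - δ) * (β * L) ≤ t := by
    have h1 : (1 - δ) * (m:ℝ) ≤ (m:ℝ) - k := by linarith only [hkδm]
    have h2 : (1 - δ) * (β * L) = ((1 - δ) * m) * (β * L / m) := by field_simp
    rw [h2, htdef, hqdef]
    exact mul_le_mul_of_nonneg_right h1 (by positivity)
  have hδ1 : (0:ℝ) < 1 - δ := by linarith
  have hrt : ((1 - δ) * (c * L)) ^ 2 ≤ r * t := by
    have h1 : ((1-δ)*(α*L)) * ((1-δ)*(β*L)) ≤ r * t :=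
      mul_le_mul hr ht (by positivity) hr0
    have hcc : ((1 - δ) * (c * L)) ^ 2 = ((1-δ)*(α*L)) * ((1-δ)*(β*L)) := by
      linear_combination ((1-δ)*L)^2 * hc2
    rw [hcc]; exact h1
  set B := r * t * Real.exp 2 / (k:ℝ)^2 with hBdef
  have hB : Real.exp (2 - 6*δ) ≤ B := by
    have h36 : Real.exp (-(3*δ)) ≤ (1-δ)/(1+δ) := by
      have h1 : 1 + 3*δ ≤ Real.exp (3*δ) := by
        have := Real.add_one_le_exp (3*δ); linarith
      rw [Real.exp_neg]
      have h3 : (Real.exp (3*δ))⁻¹ ≤ (1+3*δ)⁻¹ := inv_anti₀ (by linarith) h1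
      apply le_trans h3
      rw [inv_eq_one_div, div_le_div_iff₀ (by linarith) (by linarith)]
      have h4 : δ * δ ≤ δ * (1/4) := mul_le_mul_of_nonneg_left hδ4 hδ0.le
      nlinarith only [h4, hδ0]
    have hBge : Real.exp 2 * ((1-δ)*(c*L))^2 / ((1+δ)*(c*L))^2 ≤ B := by
      apply div_le_div₀ (by positivity)
        (by
          have h5 := mul_le_mul_of_nonneg_right hrt (Real.exp_nonneg 2)
          linarith only [h5])
        (by positivity)
        (pow_le_pow_left₀ (le_of_lt hk0R) hk_ub 2)
    have heq : Real.exp 2 * ((1-δ)*(c*L))^2 / ((1+δ)*(c*L))^2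
        = Real.exp 2 * ((1-δ)/(1+δ))^2 := by
      have h1 : (0:ℝ) < 1 + δ := by linarith
      field_simp
    have h2 : Real.exp (2 - 6*δ) = Real.exp 2 * (Real.exp (-(3*δ)))^2 := by
      rw [show (2 - 6*δ) = 2 + (-(3*δ)) + (-(3*δ)) by ring, Real.exp_add, Real.exp_add, sq]
      ring
    calc Real.exp (2-6*δ) = Real.exp 2 * (Real.exp (-(3*δ)))^2 := h2
      _ ≤ Real.exp 2 * ((1-δ)/(1+δ))^2 :=
        mul_le_mul_of_nonneg_left (pow_le_pow_left₀ (Real.exp_nonneg _) h36 2) (Real.exp_nonneg 2)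
      _ = Real.exp 2 * ((1-δ)*(c*L))^2 / ((1+δ)*(c*L))^2 := heq.symm
      _ ≤ B := hBge
  have hB0 : 0 ≤ B := le_trans (Real.exp_nonneg _) hB
  have hBk : Real.exp ((2 - 6*δ) * (c * L)) ≤ B ^ k := by
    have h1 : Real.exp ((2-6*δ)*(c*L)) ≤ Real.exp ((2-6*δ)*(k:ℝ)) :=
      Real.exp_le_exp.mpr (mul_le_mul_of_nonneg_left hk_ge (by linarith))
    have h2 : (Real.exp (2-6*δ))^k = Real.exp ((2-6*δ)*(k:ℝ)) := by
      rw [← Real.exp_nat_mul, mul_comm]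
    calc Real.exp ((2-6*δ)*(c*L)) ≤ Real.exp ((2-6*δ)*(k:ℝ)) := h1
      _ = (Real.exp (2-6*δ))^k := h2.symm
      _ ≤ B ^ k := pow_le_pow_left₀ (Real.exp_nonneg _) hB k
  have hmp : (m:ℝ) * p = α * L := by rw [hpdef]; field_simp
  have hmq : (m:ℝ) * q = β * L := by rw [hqdef]; field_simp
  have h1p : (0:ℝ) < 1 - p := by linarith
  have h1q : (0:ℝ) < 1 - q := by linarith
  have hαL0 : 0 ≤ α * L := by positivity
  have hβL0 : 0 ≤ β * L := by positivity
  have htailp : Real.exp (-((1+2*δ)*(α*L))) ≤ Real.exp (-((m:ℝ)*p)/(1-p)) := by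
    apply Real.exp_le_exp.mpr
    rw [hmp, neg_div, neg_le_neg_iff, div_le_iff₀ h1p]
    have h1 := mul_le_mul_of_nonneg_left hp12 hαL0
    have h2 := mul_le_mul_of_nonneg_left hpδ' hαL0
    have h3 := mul_le_mul_of_nonneg_left h1 hδ0.le
    linarith only [h1, h2, h3]
  have htailq : Real.exp (-((1+2*δ)*(β*L))) ≤ Real.exp (-((m:ℝ)*q)/(1-q)) := by
    apply Real.exp_le_exp.mpr
    rw [hmq, neg_div, neg_le_neg_iff, div_le_iff₀ h1q]
    have h1 := mul_le_mul_of_nonneg_left hq12 hβL0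
    have h2 := mul_le_mul_of_nonneg_left hqδ hβL0
    have h3 := mul_le_mul_of_nonneg_left h1 hδ0.le
    linarith only [h1, h2, h3]
  have hden : Real.exp 2 * (k:ℝ)^2 ≤ (m:ℝ)^ε := by
    apply le_trans _ hk2
    have h1 := pow_le_pow_left₀ (le_of_lt hk0R) hk2c 2
    have h2 := mul_le_mul_of_nonneg_left h1 (Real.exp_nonneg 2)
    linarith only [h2]
  have hXp := pmf_lb m k p hp0 hp12 hk1 hkm
  have hXq := pmf_lb m k q hq0 hq12 hk1 hkm
  rw [← hrdef] at hXp
  rw [← htdef] at hXq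
  have hXq0 : 0 ≤ t^k * Real.exp ((k:ℝ)-1) / (k:ℝ)^(k+1) * Real.exp (-((m:ℝ)*q)/(1-q)) := by
    apply mul_nonneg _ (Real.exp_nonneg _)
    apply div_nonneg (mul_nonneg (pow_nonneg ht0 _) (Real.exp_nonneg _)) (by positivity)
  have hiden : (r^k * Real.exp ((k:ℝ)-1) / (k:ℝ)^(k+1)) * (t^k * Real.exp ((k:ℝ)-1) / (k:ℝ)^(k+1))
      = B^k / (Real.exp 2 * (k:ℝ)^2) := by
    have e1 : Real.exp ((k:ℝ)) = Real.exp 1 ^ k := by rw [← Real.exp_nat_mul, mul_one]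
    have e1' : Real.exp ((k:ℝ) - 1) = Real.exp 1 ^ k / Real.exp 1 := by
      rw [eq_div_iff (Real.exp_ne_zero 1), ← e1, ← Real.exp_add]
      ring_nf
    have e2 : Real.exp 2 = Real.exp 1 ^ 2 := by
      rw [← Real.exp_nat_mul]; norm_num
    rw [hBdef, e1', e2]
    exact algebra_iden r t (Real.exp 1) ((k:ℝ)) k hk0R.ne' (Real.exp_ne_zero 1)
  have hA : B^k / (Real.exp 2 * (k:ℝ)^2) *
      (Real.exp (-((m:ℝ)*p)/(1-p)) * Real.exp (-((m:ℝ)*q)/(1-q)))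
      ≤ binomPMF m p k * binomPMF m q k := by
    rw [← hiden]
    calc (r^k * Real.exp ((k:ℝ)-1) / (k:ℝ)^(k+1)) * (t^k * Real.exp ((k:ℝ)-1) / (k:ℝ)^(k+1)) *
        (Real.exp (-((m:ℝ)*p)/(1-p)) * Real.exp (-((m:ℝ)*q)/(1-q)))
        = (r^k * Real.exp ((k:ℝ)-1) / (k:ℝ)^(k+1) * Real.exp (-((m:ℝ)*p)/(1-p))) *
          (t^k * Real.exp ((k:ℝ)-1) / (k:ℝ)^(k+1) * Real.exp (-((m:ℝ)*q)/(1-q))) := by ring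
      _ ≤ binomPMF m p k * binomPMF m q k := mul_le_mul hXp hXq hXq0 (hpmfp k)
  have hB2 : Real.exp ((2-6*δ)*(c*L)) / (m:ℝ)^ε ≤ B^k / (Real.exp 2 * (k:ℝ)^2) :=
    div_le_div₀ (pow_nonneg hB0 k) hBk (by positivity) hden
  have hT2 : Real.exp (-((1+2*δ)*((α+β)*L)))
      ≤ Real.exp (-((m:ℝ)*p)/(1-p)) * Real.exp (-((m:ℝ)*q)/(1-q)) := by
    have h3 := mul_le_mul htailp htailq (Real.exp_nonneg _) (Real.exp_nonneg _)
    calc Real.exp (-((1+2*δ)*((α+β)*L)))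
        = Real.exp (-((1+2*δ)*(α*L))) * Real.exp (-((1+2*δ)*(β*L))) := by
          rw [← Real.exp_add]; congr 1; ring
      _ ≤ _ := h3
  have hfinal : (m:ℝ)^(-1+ε) ≤ binomPMF m p k * binomPMF m q k := by
    calc (m:ℝ)^(-1+ε)
        ≤ (m:ℝ)^(((2-6*δ)*c - (1+2*δ)*(α+β)) - ε) :=
          Real.rpow_le_rpow_of_exponent_le hm1 (by linarith)
      _ = (m:ℝ)^((2-6*δ)*c - (1+2*δ)*(α+β)) / (m:ℝ)^ε := Real.rpow_sub hm0 _ _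
      _ = Real.exp ((2-6*δ)*(c*L)) * Real.exp (-((1+2*δ)*((α+β)*L))) / (m:ℝ)^ε := by
          rw [Real.rpow_def_of_pos hm0, ← Real.exp_add]
          congr 1
          rw [← hLdef]
          ring
      _ = (Real.exp ((2-6*δ)*(c*L)) / (m:ℝ)^ε) * Real.exp (-((1+2*δ)*((α+β)*L))) := by ring
      _ ≤ (B^k / (Real.exp 2 * (k:ℝ)^2)) *
          (Real.exp (-((m:ℝ)*p)/(1-p)) * Real.exp (-((m:ℝ)*q)/(1-q))) :=
          mul_le_mul hB2 hT2 (Real.exp_nonneg _)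
            (div_nonneg (pow_nonneg hB0 k) (by positivity))
      _ ≤ binomPMF m p k * binomPMF m q k := hA
  exact le_trans hfinal hsum

theorem stmt_9 (α β : ℝ) (hβ : 0 < β) (hαβ : β < α)
    (hthr : Real.sqrt α - Real.sqrt β < 1) :
    ∃ ε > (0 : ℝ), ∃ M : ℕ, ∀ m ≥ M,
      (∑ x ∈ Finset.range (m + 1), ∑ w ∈ Finset.range (m + 1),
          if x ≤ w then
            binomPMF m (α * Real.log m / m) x * binomPMF m (β * Real.log m / m) w
          else 0)
        ≥ (m : ℝ) ^ (-1 + ε) := by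
  have hα : 0 < α := lt_trans hβ hαβ
  set c := Real.sqrt (α * β) with hcdef
  have hc : 0 < c := Real.sqrt_pos.mpr (by positivity)
  have hc2 : c ^ 2 = α * β := Real.sq_sqrt (by positivity)
  have ha2 : Real.sqrt α ^ 2 = α := Real.sq_sqrt hα.le
  have hb2 : Real.sqrt β ^ 2 = β := Real.sq_sqrt hβ.le
  have hab : c = Real.sqrt α * Real.sqrt β := by rw [hcdef, Real.sqrt_mul hα.le]
  have hba : Real.sqrt β ≤ Real.sqrt α := Real.sqrt_le_sqrt (le_of_lt hαβ)
  have h0 : 0 ≤ Real.sqrt α - Real.sqrt β := by linarith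
  have h0' : 0 < 1 + (Real.sqrt α - Real.sqrt β) := by linarith
  have hx : (Real.sqrt α - Real.sqrt β) ^ 2 < 1 := by nlinarith [hthr, h0']
  have heq : α + β - 2 * c = (Real.sqrt α - Real.sqrt β) ^ 2 := by
    linear_combination -ha2 - hb2 - 2 * hab
  have hs : α + β - 2 * c < 1 := by rw [heq]; exact hx
  set g := 1 - (α + β - 2 * c) with hgdef
  have hg : 0 < g := by rw [hgdef]; linarith
  set ε := g / 4 with hεdef
  have hε0 : 0 < ε := by positivity
  set δ := min (1 / 4) (g / (24 * c + 8 * (α + β) + 1)) with hδdef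
  have hδ0 : 0 < δ := lt_min (by norm_num) (by positivity)
  have hδ4 : δ ≤ 1 / 4 := min_le_left _ _
  have hδg : (6 * c + 2 * (α + β)) * δ ≤ g / 4 := by
    have hden : (0:ℝ) < 24 * c + 8 * (α + β) + 1 := by positivity
    have h1 : δ ≤ g / (24 * c + 8 * (α + β) + 1) := min_le_right _ _
    have h2 : (6 * c + 2 * (α + β)) * δ
        ≤ (6 * c + 2 * (α + β)) * (g / (24 * c + 8 * (α + β) + 1)) :=
      mul_le_mul_of_nonneg_left h1 (by positivity)
    have h3 : (6 * c + 2 * (α + β)) * (g / (24 * c + 8 * (α + β) + 1)) ≤ g / 4 := by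
      rw [show (6 * c + 2 * (α + β)) * (g / (24 * c + 8 * (α + β) + 1))
          = ((6 * c + 2 * (α + β)) * g) / (24 * c + 8 * (α + β) + 1) by ring]
      rw [div_le_div_iff₀ hden (by norm_num : (0:ℝ) < 4)]
      nlinarith [hg.le]
    linarith only [h2, h3]
  have hexpo : -1 + ε ≤ (2 - 6 * δ) * c - (1 + 2 * δ) * (α + β) - ε := by
    have h1 : (2 - 6 * δ) * c - (1 + 2 * δ) * (α + β)
        = (2 * c - (α + β)) - (6 * c + 2 * (α + β)) * δ := by ring
    rw [h1]
    linarith only [hδg, hε0, hεdef, hgdef]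
  -- eventually facts over ℝ
  set δ' := min (δ / α) (δ / (2 * c)) with hδ'def
  have hδ'0 : 0 < δ' := lt_min (by positivity) (by positivity)
  have htend : Filter.Tendsto (fun x : ℝ => Real.log x / x) Filter.atTop (nhds 0) := by
    have := Real.tendsto_pow_log_div_mul_add_atTop 1 0 1 one_ne_zero
    simpa using this
  have hev1 : ∀ᶠ x : ℝ in Filter.atTop, Real.log x / x < δ' :=
    htend.eventually_lt_const hδ'0
  have hc'pos : (0:ℝ) < (Real.exp 2 * (2 * c) ^ 2)⁻¹ := by positivity
  have hev2 := (isLittleO_log_rpow_rpow_atTop (2 : ℝ) hε0).def hc'pos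
  have hev3 : ∀ᶠ x : ℝ in Filter.atTop, max (1 / δ) 1 / c ≤ Real.log x :=
    Real.tendsto_log_atTop.eventually_ge_atTop _
  have hevR := hev1.and (hev2.and hev3)
  have hevN := (tendsto_natCast_atTop_atTop (R := ℝ)).eventually hevR
  obtain ⟨M₀, hM₀⟩ := Filter.eventually_atTop.mp hevN
  refine ⟨ε, hε0, max M₀ 2, ?_⟩
  intro m hm
  obtain ⟨h1, h2, h3⟩ := hM₀ m (le_trans (le_max_left _ _) hm)
  have hm2 : 2 ≤ m := le_trans (le_max_right _ _) hm
  have hm0 : (0:ℝ) < m := by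
    have : (2:ℝ) ≤ (m:ℝ) := by exact_mod_cast hm2
    linarith
  have hm1 : (1:ℝ) ≤ (m:ℝ) := by
    have : (2:ℝ) ≤ (m:ℝ) := by exact_mod_cast hm2
    linarith
  set L := Real.log (m:ℝ) with hLdef
  have hL0 : 0 ≤ L := Real.log_nonneg hm1
  -- hcL : 1/δ ≤ c * L
  have hcL : 1 / δ ≤ c * L := by
    have h4 : max (1 / δ) 1 ≤ c * L := (div_le_iff₀' hc).mp h3
    exact le_trans (le_max_left _ _) h4
  -- hpδ : α * L / m ≤ δ
  have hpδ : α * L / (m:ℝ) ≤ δ := by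
    have h5 : L / (m:ℝ) ≤ δ / α := le_trans h1.le (min_le_left _ _)
    rw [div_le_div_iff₀ hm0 hα] at h5
    rw [div_le_iff₀ hm0]
    linarith only [h5]
  -- hkmδ : 2 * c * L ≤ δ * m
  have hkmδ : 2 * c * L ≤ δ * (m:ℝ) := by
    have h5 : L / (m:ℝ) ≤ δ / (2 * c) := le_trans h1.le (min_le_right _ _)
    rw [div_le_div_iff₀ hm0 (by positivity : (0:ℝ) < 2 * c)] at h5
    linarith only [h5]
  -- hk2 : exp 2 * (2 c L)^2 ≤ m ^ ε
  have hk2 : Real.exp 2 * (2 * c * L) ^ 2 ≤ (m:ℝ) ^ ε := by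
    have hnorm := h2
    rw [Real.norm_eq_abs, Real.norm_eq_abs,
      show ((2:ℝ)) = ((2:ℕ):ℝ) by norm_num, Real.rpow_natCast] at hnorm
    rw [abs_of_nonneg (by positivity : (0:ℝ) ≤ Real.log (m:ℝ) ^ (2:ℕ)),
      abs_of_nonneg (Real.rpow_nonneg hm0.le ε)] at hnorm
    have h6 : Real.exp 2 * (2 * c * L) ^ 2
        = (Real.exp 2 * (2 * c) ^ 2) * L ^ 2 := by ring
    rw [h6]
    calc (Real.exp 2 * (2 * c) ^ 2) * L ^ 2
        ≤ (Real.exp 2 * (2 * c) ^ 2) * ((Real.exp 2 * (2 * c) ^ 2)⁻¹ * (m:ℝ) ^ ε) :=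
          mul_le_mul_of_nonneg_left hnorm (by positivity)
      _ = (m:ℝ) ^ ε := by
          rw [← mul_assoc, mul_inv_cancel₀ (by positivity), one_mul]
  exact core α β c δ ε m hα hβ hαβ.le hc hc2 hδ0 hδ4 hε0 hexpo hm2 hcL hpδ hkmδ hk2
end

section
/- Let $A$ be the adjacency matrix of a graph on $n = km$ vertices with partition $P$ into $k$ equal clusters, and let $M^* = D^* + \sum_i x_i^*(R_i + C_i) - A - Z^*$ with $D^*, x_i^*, Z^*$ defined as in the dual certificate construction of the paper. Then for every cluster $P_t$ with indicator vector $v_t$, $M^* v_t = 0$. -/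
open Finset Matrix

theorem stmt_16 (k m n : ℕ) (hk : 2 ≤ k) (hm : 0 < m) (hn : n = k * m)
    (A : Matrix (Fin n) (Fin n) ℝ) (hAsymm : A.IsSymm)
    (hAdiag : ∀ i, A i i = 0) (hA01 : ∀ i j, A i j = 0 ∨ A i j = 1)
    (P : Fin n → Fin k)
    (hP : ∀ t : Fin k, (Finset.univ.filter (fun i => P i = t)).card = m)
    (δ : Fin n → Fin k → ℝ)
    (hδ : ∀ i t, δ i t = ∑ j ∈ Finset.univ.filter (fun j => P j = t), A i j)
    (δin : Fin n → ℝ) (hδin : ∀ i, δin i = δ i (P i))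
    (δmax : Fin n → ℝ)
    (hδmax : ∀ i, IsGreatest {x | ∃ t : Fin k, t ≠ P i ∧ x = δ i t} (δmax i))
    (δP : Fin k → Fin k → ℝ)
    (hδP : ∀ s t, δP s t = ∑ i ∈ Finset.univ.filter (fun i => P i = s),
        ∑ j ∈ Finset.univ.filter (fun j => P j = t), A i j)
    (μ : ℝ)
    (hμ : IsLeast {x | ∃ t₁ t₂ : Fin k, t₁ ≠ t₂ ∧ x = δP t₁ t₂} μ)
    (Z : Matrix (Fin n) (Fin n) ℝ)
    (hZ : ∀ i j, Z i j = if P i = P j then 0 else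
        (δmax i - δ i (P j)) / m + (δmax j - δ j (P i)) / m
          + (δP (P j) (P i) - μ) / (m * m))
    (x : Fin n → ℝ)
    (hx : ∀ i, x i = δmax i / m - μ / (2 * (m * m)))
    (D : Matrix (Fin n) (Fin n) ℝ) (hDdiag : D.IsDiag)
    (hD : ∀ i, D i i = δin i - δmax i
        - (∑ j ∈ Finset.univ.filter (fun j => P j = P i), δmax j / m) + μ / m)
    (R : Fin n → Matrix (Fin n) (Fin n) ℝ)
    (hR : ∀ i a b, R i a b = if a = i then (1 : ℝ) else 0)
    (M : Matrix (Fin n) (Fin n) ℝ)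
    (hM : M = D + (∑ i, x i • (R i + (R i)ᵀ)) - A - Z)
    (v : Fin k → (Fin n → ℝ))
    (hv : ∀ t i, v t i = if P i = t then (1 : ℝ) else 0) :
    ∀ t : Fin k, M.mulVec (v t) = 0 := by
  intro t
  funext i
  have hmR : (m : ℝ) ≠ 0 := Nat.cast_ne_zero.mpr hm.ne'
  set S : Finset (Fin n) := Finset.univ.filter (fun j => P j = t) with hS
  have hcard : (S.card : ℝ) = (m : ℝ) := by rw [hP t]
  have key : ∀ j, M i j = (if i = j then D i i else 0) + (x i + x j) - A i j - Z i j := by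
    intro j
    have hsum : (∑ l, x l • (R l + (R l)ᵀ)) i j = x i + x j := by
      simp only [Matrix.sum_apply, Matrix.smul_apply, Matrix.add_apply,
        Matrix.transpose_apply, hR, smul_eq_mul, mul_add]
      rw [Finset.sum_add_distrib]
      simp [mul_ite]
    have hD' : D i j = if i = j then D i i else 0 := by
      by_cases h : i = j
      · simp [h]
      · simp [h, hDdiag h]
    rw [hM]
    simp only [Matrix.sub_apply, Matrix.add_apply]
    rw [hsum, hD']
  have hmv : M.mulVec (v t) i = ∑ j ∈ S, M i j := by
    simp only [Matrix.mulVec, dotProduct, hv]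
    rw [hS, Finset.sum_filter]
    simp [mul_ite]
  have hxsum : ∑ j ∈ S, x j = (∑ j ∈ S, δmax j / (m : ℝ)) - (m : ℝ) * (μ / (2 * (m * m))) := by
    simp only [hx, Finset.sum_sub_distrib, Finset.sum_const, nsmul_eq_mul, hcard]
  have hδit : ∑ j ∈ S, A i j = δ i t := (hδ i t).symm
  have hexpand : ∑ j ∈ S, M i j =
      (if P i = t then D i i else 0) + ((m : ℝ) * x i + ∑ j ∈ S, x j)
        - δ i t - ∑ j ∈ S, Z i j := by
    rw [Finset.sum_congr rfl (fun j _ => key j)]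
    simp only [Finset.sum_sub_distrib, Finset.sum_add_distrib, Finset.sum_const,
      nsmul_eq_mul, hcard, hδit]
    congr 3
    rw [Finset.sum_ite_eq S i (fun _ => D i i)]
    simp [hS]
  rw [hmv, hexpand]
  by_cases hPi : P i = t
  · have hZ0 : ∑ j ∈ S, Z i j = 0 := by
      apply Finset.sum_eq_zero
      intro j hj
      have : P j = t := by simpa [hS] using hj
      rw [hZ]
      simp [hPi, this]
    have hfil : Finset.univ.filter (fun j => P j = P i) = S := by
      rw [hS, hPi]
    rw [hZ0, if_pos hPi, hD i, hfil, hxsum, hx i, hδin, hPi, Pi.zero_apply]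
    field_simp
    ring
  · have hδjPi : ∑ j ∈ S, δ j (P i) = δP t (P i) := by
      rw [hδP]
      exact Finset.sum_congr rfl (fun j _ => hδ j (P i))
    have hZsum : ∑ j ∈ S, Z i j =
        (m : ℝ) * ((δmax i - δ i t) / m)
          + ((∑ j ∈ S, δmax j) - δP t (P i)) / m
          + (m : ℝ) * ((δP t (P i) - μ) / (m * m)) := by
      have : ∀ j ∈ S, Z i j = (δmax i - δ i t) / m + (δmax j - δ j (P i)) / m
          + (δP t (P i) - μ) / (m * m) := by
        intro j hj
        have hjt : P j = t := by simpa [hS] using hj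
        rw [hZ]
        rw [if_neg (by rw [hjt]; exact hPi), hjt]
      rw [Finset.sum_congr rfl this]
      simp only [Finset.sum_add_distrib, Finset.sum_const, nsmul_eq_mul, hcard]
      congr 1
      congr 1
      rw [sub_div, ← hδjPi, Finset.sum_div, Finset.sum_div, ← Finset.sum_sub_distrib]
      exact Finset.sum_congr rfl (fun j _ => sub_div _ _ _)
    rw [if_neg hPi, hZsum, hxsum, hx i, Pi.zero_apply]
    have : ∑ j ∈ S, δmax j / (m : ℝ) = (∑ j ∈ S, δmax j) / m := by
      rw [Finset.sum_div]
    rw [this]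
    field_simp
    ring
end
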